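/- Let N ≥ 1, let r = ord(A,N), let U be a unitary operator on H_N satisfying the Egorov property for A, and let ψ_1, …, ψ_N be an orthonormal basis of H_N consisting of eigenvectors of U. Then ∑_{i=1}^N |⟨T_N(n)ψ_i, ψ_i⟩|^4 ≤ (N / r^4) · ν(N,n), where ν(N,n) is the number of quadruples (i,j,k,l) with 1 ≤ i,j,k,l ≤ r such that n(A^i − A^j + A^k − A^l) ≡ 0 (mod N) (the row vector n times the matrix, each entry congruent to 0 mod N). -/

import Mathlib

open Matrix

/-- `matOrd A N` is the order of `A` modulo `N`: the least `k ≥ 1`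
with `A^k ≡ I (mod N)`. -/
noncomputable def matOrd (A : Matrix (Fin 2) (Fin 2) ℤ) (N : ℕ) : ℕ :=
  sInf {k | 0 < k ∧ ∀ i j, (N : ℤ) ∣ (A ^ k - 1) i j}

/-- The inner product on `H_N`: `⟨φ,ψ⟩ = (1/N) ∑_{Q mod N} φ(Q) conj(ψ(Q))`. -/
noncomputable def innerH (N : ℕ) [NeZero N] (φ ψ : ZMod N → ℂ) : ℂ :=
  (N : ℂ)⁻¹ * ∑ Q : ZMod N, φ Q * starRingEnd ℂ (ψ Q)

/-- The translation operator `T_N(n)` on `H_N`: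
`(T_N(n)ψ)(Q) = e^{iπ n₁ n₂ / N} e^{2πi n₂ Q / N} ψ(Q + n₁)`. -/
noncomputable def TN (N : ℕ) (n : Fin 2 → ℤ) (ψ : ZMod N → ℂ) : ZMod N → ℂ :=
  fun Q => Complex.exp (Real.pi * Complex.I * (n 0 : ℂ) * (n 1 : ℂ) / (N : ℂ)) *
    Complex.exp (2 * Real.pi * Complex.I * (n 1 : ℂ) * (Q.val : ℂ) / (N : ℂ)) *
    ψ (Q + (n 0 : ZMod N))

/-- `nu A N n` is the number of quadruples `(i,j,k,l)` with
`1 ≤ i,j,k,l ≤ ord(A,N)` and `n (A^i - A^j + A^k - A^l) ≡ 0 (mod N)`. -/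
noncomputable def nu (A : Matrix (Fin 2) (Fin 2) ℤ) (N : ℕ) (n : Fin 2 → ℤ) : ℕ :=
  {q : ℕ × ℕ × ℕ × ℕ |
    q.1 ∈ Finset.Icc 1 (matOrd A N) ∧ q.2.1 ∈ Finset.Icc 1 (matOrd A N) ∧
    q.2.2.1 ∈ Finset.Icc 1 (matOrd A N) ∧ q.2.2.2 ∈ Finset.Icc 1 (matOrd A N) ∧
    ∀ m, (N : ℤ) ∣ Matrix.vecMul n (A ^ q.1 - A ^ q.2.1 + A ^ q.2.2.1 - A ^ q.2.2.2) m}.ncard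

open Finset
noncomputable def eh (N : ℕ) (x : ℤ) : ℂ :=
  Complex.exp (Real.pi * Complex.I * (x : ℂ) / (N : ℂ))

lemma eh_eq (N : ℕ) (x : ℤ) : eh N x = Complex.exp ((↑(Real.pi * x / N) : ℂ) * Complex.I) := by
  unfold eh; congr 1; push_cast; ring

lemma eh_abs (N : ℕ) (x : ℤ) : ‖eh N x‖ = 1 := by
  rw [eh_eq]; exact Complex.norm_exp_ofReal_mul_I _

lemma eh_add (N : ℕ) (x y : ℤ) : eh N x * eh N y = eh N (x + y) := by
  unfold eh; rw [← Complex.exp_add]; congr 1; push_cast; ring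

lemma eh_conj (N : ℕ) (x : ℤ) : (starRingEnd ℂ) (eh N x) = eh N (-x) := by
  rw [eh_eq, eh_eq, ← Complex.exp_conj]
  congr 1
  simp [Complex.conj_ofReal, mul_comm]
  push_cast
  ring

lemma eh_period (N : ℕ) [NeZero N] (x y : ℤ) (h : (2 * N : ℤ) ∣ (x - y)) :
    eh N x = eh N y := by
  obtain ⟨k, hk⟩ := h
  have hx : x = y + 2 * N * k := by linarith
  have hN : (N : ℂ) ≠ 0 := Nat.cast_ne_zero.mpr (NeZero.ne N)
  subst hx
  rw [← eh_add]
  unfold eh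
  rw [show (Real.pi : ℂ) * Complex.I * ((2 * N * k : ℤ) : ℂ) / N = k * (2 * Real.pi * Complex.I) by
    push_cast; field_simp]
  rw [Complex.exp_int_mul_two_pi_mul_I, mul_one]

lemma eh_pow (N : ℕ) (t : ℤ) (q : ℕ) : eh N (2 * t * q) = (eh N (2 * t)) ^ q := by
  induction q with
  | zero => simp [eh]
  | succ q ih =>
      rw [pow_succ, ← ih, eh_add]
      congr 1
      push_cast
      ring

lemma eh_one_iff (N : ℕ) [NeZero N] (t : ℤ) : eh N (2 * t) = 1 ↔ (N:ℤ) ∣ t := by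
  have hNne : (N : ℂ) ≠ 0 := Nat.cast_ne_zero.mpr (NeZero.ne N)
  have hpi : (Real.pi : ℂ) ≠ 0 := by
    simpa using Complex.ofReal_ne_zero.mpr Real.pi_ne_zero
  constructor
  · intro hc
    unfold eh at hc
    rw [Complex.exp_eq_one_iff] at hc
    obtain ⟨k, hk⟩ := hc
    have htk : ((t : ℂ)) = (k : ℂ) * N := by
      have hI : Complex.I ≠ 0 := Complex.I_ne_zero
      field_simp at hk
      have h2 : (Real.pi:ℂ) * Complex.I * 2 ≠ 0 := by
        simp [hpi, Complex.I_ne_zero]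
      apply mul_left_cancel₀ h2
      push_cast at hk
      linear_combination (↑Real.pi * Complex.I) * hk
    have : (t : ℤ) = k * N := by exact_mod_cast htk
    exact ⟨k, by linarith⟩
  · intro ⟨k, hk⟩
    have : eh N (2 * t) = eh N 0 := by
      apply eh_period
      exact ⟨k, by rw [hk]; ring⟩
    rw [this]
    unfold eh
    norm_num

lemma eh_pow_N (N : ℕ) [NeZero N] (t : ℤ) : (eh N (2 * t)) ^ N = 1 := by
  rw [← eh_pow]
  unfold eh
  have hNne : (N : ℂ) ≠ 0 := Nat.cast_ne_zero.mpr (NeZero.ne N)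
  rw [show (Real.pi : ℂ) * Complex.I * ((2 * t * N : ℤ) : ℂ) / N = t * (2 * Real.pi * Complex.I) by
    push_cast; field_simp]
  exact Complex.exp_int_mul_two_pi_mul_I t

lemma sum_eh (N : ℕ) [NeZero N] (t : ℤ) :
    ‖∑ Q : ZMod N, eh N (2 * t * (Q.val : ℤ))‖ = if (N : ℤ) ∣ t then (N : ℝ) else 0 := by
  have hsum : ∑ Q : ZMod N, eh N (2 * t * (Q.val : ℤ)) = ∑ q ∈ Finset.range N, (eh N (2 * t)) ^ q := by
    apply Finset.sum_nbij' (i := fun (Q : ZMod N) => Q.val) (j := fun q => (q : ZMod N))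
    · intro Q _; exact Finset.mem_range.mpr (ZMod.val_lt Q)
    · intro q _; exact Finset.mem_univ _
    · intro Q _; exact ZMod.natCast_rightInverse Q
    · intro q hq; exact ZMod.val_cast_of_lt (Finset.mem_range.mp hq)
    · intro Q _; exact eh_pow N t Q.val
  rw [hsum]
  by_cases h : (N:ℤ) ∣ t
  · rw [if_pos h, (eh_one_iff N t).mpr h]
    simp
  · rw [if_neg h]
    have hne : eh N (2*t) ≠ 1 := fun hc => h ((eh_one_iff N t).mp hc)
    rw [geom_sum_eq hne, eh_pow_N, sub_self, zero_div, norm_zero]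

lemma TN_eq (N : ℕ) (n : Fin 2 → ℤ) (ψ : ZMod N → ℂ) (Q : ZMod N) :
    TN N n ψ Q = eh N (n 0 * n 1) * eh N (2 * n 1 * (Q.val : ℤ)) * ψ (Q + (n 0 : ZMod N)) := by
  unfold TN eh
  congr 3 <;> push_cast <;> ring

lemma val_shift (N : ℕ) [NeZero N] (Q : ZMod N) (c : ℤ) :
    (N : ℤ) ∣ (((Q + (c : ZMod N)).val : ℤ) - ((Q.val : ℤ) + c)) := by
  have h : ((((Q + (c : ZMod N)).val : ℤ) - ((Q.val : ℤ) + c) : ℤ) : ZMod N) = 0 := by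
    push_cast
    simp [ZMod.intCast_cast, ZMod.natCast_val, ZMod.intCast_zmod_cast]
  exact (ZMod.intCast_zmod_eq_zero_iff_dvd _ N).mp h

lemma eh_shift (N : ℕ) [NeZero N] (t : ℤ) (Q : ZMod N) (c : ℤ) :
    eh N (2 * t * ((Q + (c : ZMod N)).val : ℤ)) = eh N (2 * t * (Q.val : ℤ)) * eh N (2 * t * c) := by
  rw [eh_add]
  apply eh_period
  have := val_shift N Q c
  obtain ⟨k, hk⟩ := this
  exact ⟨t * k, by rw [show 2 * t * ((Q + (c : ZMod N)).val : ℤ) - (2 * t * (Q.val : ℤ) + 2 * t * c) = 2 * t * ((((Q + (c : ZMod N)).val : ℤ)) - ((Q.val : ℤ) + c)) by ring, hk]; ring⟩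

lemma cs_sum (N : ℕ) [NeZero N] (f g : ZMod N → ℂ) :
    ‖∑ Q : ZMod N, f Q * (starRingEnd ℂ) (g Q)‖ ≤
      Real.sqrt (∑ Q : ZMod N, ‖f Q‖ ^ 2) *
      Real.sqrt (∑ Q : ZMod N, ‖g Q‖ ^ 2) := by
  have h := @norm_inner_le_norm ℂ (EuclideanSpace ℂ (ZMod N)) _ _ _
      ((WithLp.equiv 2 _).symm g) ((WithLp.equiv 2 _).symm f)
  rw [EuclideanSpace.norm_eq, EuclideanSpace.norm_eq] at h
  rw [PiLp.inner_apply] at h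
  simp only [WithLp.equiv_symm_apply, PiLp.toLp_apply, RCLike.inner_apply] at h
  calc ‖∑ Q : ZMod N, f Q * (starRingEnd ℂ) (g Q)‖
      = ‖∑ x : ZMod N, (starRingEnd ℂ) (g x) * f x‖ := by
        congr 1; exact Finset.sum_congr rfl fun x _ => mul_comm _ _
    _ ≤ Real.sqrt (∑ x : ZMod N, ‖g x‖ ^ 2) *
        Real.sqrt (∑ x : ZMod N, ‖f x‖ ^ 2) := by
          rwa [Finset.sum_congr rfl fun x _ => mul_comm ((starRingEnd ℂ) (g x)) (f x)]
    _ = _ := mul_comm _ _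

lemma onb_complete (N : ℕ) [NeZero N] (ψ : Fin N → ZMod N → ℂ)
    (hON : ∀ i j, innerH N (ψ i) (ψ j) = if i = j then 1 else 0) (Qa Qb : ZMod N) :
    ∑ i, ψ i Qa * (starRingEnd ℂ) (ψ i Qb) = if Qa = Qb then (N : ℂ) else 0 := by
  classical
  have hNne : (N : ℂ) ≠ 0 := Nat.cast_ne_zero.mpr (NeZero.ne N)
  set S : Matrix (Fin N) (ZMod N) ℂ := Matrix.of (fun i Q => ψ i Q) with hS
  set S' : Matrix (ZMod N) (Fin N) ℂ := Matrix.of (fun Q j => (starRingEnd ℂ) (ψ j Q) / N) with hS'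
  have h1 : S * S' = 1 := by
    ext i j
    rw [Matrix.mul_apply, Matrix.one_apply]
    have := hON i j
    unfold innerH at this
    simp only [hS, hS', Matrix.of_apply]
    rw [show ∑ Q : ZMod N, ψ i Q * ((starRingEnd ℂ) (ψ j Q) / N)
        = (N:ℂ)⁻¹ * ∑ Q : ZMod N, ψ i Q * (starRingEnd ℂ) (ψ j Q) by
      rw [Finset.mul_sum]; exact Finset.sum_congr rfl fun Q _ => by field_simp]
    rw [this]
  have h2 : S' * S = 1 :=
    (Matrix.mul_eq_one_comm_of_equiv (Fintype.equivFinOfCardEq (ZMod.card N)).symm).mp h1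
  have h3 := congrFun (congrFun h2 Qb) Qa
  rw [Matrix.mul_apply, Matrix.one_apply] at h3
  simp only [hS, hS', Matrix.of_apply] at h3
  have h4 : (N:ℂ) * ∑ j, (starRingEnd ℂ) (ψ j Qb) / N * ψ j Qa
      = (N:ℂ) * if Qb = Qa then 1 else 0 := by rw [h3]
  rw [Finset.mul_sum] at h4
  calc ∑ i, ψ i Qa * (starRingEnd ℂ) (ψ i Qb)
      = ∑ j, (N:ℂ) * ((starRingEnd ℂ) (ψ j Qb) / N * ψ j Qa) := by
        exact Finset.sum_congr rfl fun j _ => by field_simp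
    _ = (N:ℂ) * if Qb = Qa then 1 else 0 := h4
    _ = if Qa = Qb then (N : ℂ) else 0 := by
        by_cases h : Qa = Qb <;> simp [h, eq_comm]

lemma trace_bound (N : ℕ) [NeZero N] (ψ : Fin N → ZMod N → ℂ)
    (hON : ∀ i j, innerH N (ψ i) (ψ j) = if i = j then 1 else 0) (a b c d : Fin 2 → ℤ) :
    ‖∑ i, innerH N (TN N d (TN N c (TN N b (TN N a (ψ i))))) (ψ i)‖ ≤
      if ((N:ℤ) ∣ (a 0 + b 0 + c 0 + d 0) ∧ (N:ℤ) ∣ (a 1 + b 1 + c 1 + d 1)) then (N:ℝ) else 0 := by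
  have hNne : (N : ℂ) ≠ 0 := Nat.cast_ne_zero.mpr (NeZero.ne N)
  set t : ℤ := a 1 + b 1 + c 1 + d 1 with ht
  set sI : ℤ := a 0 + b 0 + c 0 + d 0 with hsI
  set s : ZMod N := ((sI : ℤ) : ZMod N) with hs
  set C : ℂ := eh N (d 0 * d 1) * eh N (c 0 * c 1) * eh N (b 0 * b 1) * eh N (a 0 * a 1) *
    eh N (2 * c 1 * d 0) * eh N (2 * b 1 * (d 0 + c 0)) * eh N (2 * a 1 * (d 0 + c 0 + b 0)) with hC
  have hCabs : ‖C‖ = 1 := by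
    rw [hC]; simp only [norm_mul, eh_abs]; norm_num
  have hw : ∀ (φ : ZMod N → ℂ) (Q : ZMod N),
      TN N d (TN N c (TN N b (TN N a φ))) Q = C * eh N (2 * t * (Q.val : ℤ)) * φ (Q + s) := by
    intro φ Q
    rw [TN_eq, TN_eq, TN_eq, TN_eq]
    rw [show Q + (↑(d 0) : ZMod N) + (↑(c 0) : ZMod N) = Q + ((↑(d 0 + c 0) : ℤ) : ZMod N) by
      push_cast; rw [add_assoc]]
    rw [show Q + ((↑(d 0 + c 0) : ℤ) : ZMod N) + (↑(b 0) : ZMod N)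
        = Q + ((↑(d 0 + c 0 + b 0) : ℤ) : ZMod N) by push_cast; ring]
    rw [show Q + ((↑(d 0 + c 0 + b 0) : ℤ) : ZMod N) + (↑(a 0) : ZMod N) = Q + s by
      rw [hs, hsI]; push_cast; ring]
    rw [eh_shift, eh_shift, eh_shift]
    rw [show (2 : ℤ) * t * (Q.val : ℤ) = 2 * d 1 * Q.val + (2 * c 1 * Q.val
        + (2 * b 1 * Q.val + 2 * a 1 * Q.val)) by rw [ht]; ring]
    rw [← eh_add, ← eh_add, ← eh_add, hC]
    ring
  have hsum : ∑ i, innerH N (TN N d (TN N c (TN N b (TN N a (ψ i))))) (ψ i)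
      = (N : ℂ)⁻¹ * ∑ Q : ZMod N, C * eh N (2 * t * (Q.val : ℤ)) *
          (if Q + s = Q then (N : ℂ) else 0) := by
    unfold innerH
    rw [← Finset.mul_sum, Finset.sum_comm]
    congr 1
    refine Finset.sum_congr rfl fun Q _ => ?_
    rw [show ∑ i, TN N d (TN N c (TN N b (TN N a (ψ i)))) Q * (starRingEnd ℂ) (ψ i Q)
        = C * eh N (2 * t * (Q.val : ℤ)) * ∑ i, ψ i (Q + s) * (starRingEnd ℂ) (ψ i Q) by
      rw [Finset.mul_sum]; exact Finset.sum_congr rfl fun i _ => by rw [hw]; ring]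
    rw [onb_complete N ψ hON]
  rw [hsum]
  by_cases hs0 : s = 0
  · have : ∀ Q : ZMod N, (if Q + s = Q then (N : ℂ) else 0) = (N : ℂ) := by
      intro Q; rw [if_pos (by rw [hs0, add_zero])]
    simp only [this]
    rw [show ∑ Q : ZMod N, C * eh N (2 * t * (Q.val:ℤ)) * N
        = C * N * ∑ Q : ZMod N, eh N (2 * t * (Q.val:ℤ)) by rw [Finset.mul_sum]; exact Finset.sum_congr rfl fun Q _ => by ring]
    rw [show (N:ℂ)⁻¹ * (C * N * ∑ Q : ZMod N, eh N (2 * t * (Q.val:ℤ)))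
        = C * ∑ Q : ZMod N, eh N (2 * t * (Q.val:ℤ)) by field_simp]
    rw [norm_mul, hCabs, one_mul, sum_eh]
    have hdvd0 : (N:ℤ) ∣ sI := by
      rwa [hs, ZMod.intCast_zmod_eq_zero_iff_dvd] at hs0
    by_cases hdvd1 : (N:ℤ) ∣ t
    · rw [if_pos hdvd1, if_pos ⟨hdvd0, hdvd1⟩]
    · rw [if_neg hdvd1]
      split <;> norm_num [Nat.cast_nonneg]
  · have : ∀ Q : ZMod N, (if Q + s = Q then (N : ℂ) else 0) = 0 := by
      intro Q
      rw [if_neg]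
      intro hQ
      exact hs0 (by rwa [add_eq_left] at hQ)
    simp only [this, mul_zero, Finset.sum_const_zero, mul_zero, norm_zero]
    split <;> norm_num [Nat.cast_nonneg]

lemma TN_adjoint (N : ℕ) [NeZero N] (a : Fin 2 → ℤ) (φ χ : ZMod N → ℂ) :
    innerH N (TN N a φ) χ = innerH N φ (TN N (-a) χ) := by
  unfold innerH
  congr 1
  have key : ∀ Q : ZMod N,
      φ Q * (starRingEnd ℂ) (TN N (-a) χ Q)
      = TN N a φ (Q + ((-(a 0) : ℤ) : ZMod N)) * (starRingEnd ℂ) (χ (Q + ((-(a 0) : ℤ) : ZMod N))) := by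
    intro Q
    rw [TN_eq, TN_eq]
    simp only [Pi.neg_apply]
    rw [show Q + ((-(a 0) : ℤ) : ZMod N) + ((a 0 : ℤ) : ZMod N) = Q by push_cast; ring]
    rw [eh_shift]
    rw [_root_.map_mul, _root_.map_mul, eh_conj, eh_conj]
    rw [show Q + ((-(a 0) : ℤ) : ZMod N) = Q + (((-(a 0)) : ℤ) : ZMod N) from rfl]
    have h1 : eh N (a 0 * a 1) * (eh N (2 * a 1 * (Q.val : ℤ)) * eh N (2 * a 1 * -(a 0)))
        = eh N (-(-(a 0) * -(a 1))) * eh N (-(2 * -(a 1) * (Q.val : ℤ))) := by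
      rw [eh_add, eh_add, eh_add]
      congr 1
      ring
    calc φ Q * (eh N (-(-(a 0) * -(a 1))) * eh N (-(2 * -(a 1) * (Q.val:ℤ))) * (starRingEnd ℂ) (χ (Q + ((-(a 0) : ℤ) : ZMod N))))
        = eh N (-(-(a 0) * -(a 1))) * eh N (-(2 * -(a 1) * (Q.val:ℤ))) * φ Q * (starRingEnd ℂ) (χ (Q + ((-(a 0) : ℤ) : ZMod N))) := by ring
      _ = _ := by rw [← h1]; try ring
  rw [show ∑ Q : ZMod N, φ Q * (starRingEnd ℂ) (TN N (-a) χ Q)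
      = ∑ Q : ZMod N, TN N a φ (Q + ((-(a 0) : ℤ) : ZMod N)) * (starRingEnd ℂ) (χ (Q + ((-(a 0) : ℤ) : ZMod N))) from
    Finset.sum_congr rfl fun Q _ => key Q]
  exact (Equiv.sum_comp (Equiv.addRight (((-(a 0) : ℤ) : ZMod N)))
    (fun Q => TN N a φ Q * (starRingEnd ℂ) (χ Q))).symm

lemma matOrd_pos (A : Matrix (Fin 2) (Fin 2) ℤ) (hA : A.det = 1) (N : ℕ) [NeZero N] :
    0 < matOrd A N := by
  have hne : {k | 0 < k ∧ ∀ i j, (N : ℤ) ∣ (A ^ k - 1) i j}.Nonempty := by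
    set f : Matrix (Fin 2) (Fin 2) ℤ →+* Matrix (Fin 2) (Fin 2) (ZMod N) := (Int.castRingHom (ZMod N)).mapMatrix with hf
    set A' : Matrix (Fin 2) (Fin 2) (ZMod N) := f A with hA'
    have hdet : IsUnit A'.det := by
      rw [hA', ← RingHom.map_det, hA]
      simp
    have hU : IsUnit A' := (Matrix.isUnit_iff_isUnit_det A').mpr hdet
    obtain ⟨u, hu⟩ := hU
    have hk : u ^ (orderOf u) = 1 := pow_orderOf_eq_one u
    have hkpos : 0 < orderOf u := orderOf_pos u
    refine ⟨orderOf u, hkpos, fun i j => ?_⟩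
    have hMat : A' ^ (orderOf u) = 1 := by
      have := congrArg (Units.val) hk
      rwa [Units.val_pow_eq_pow_val, hu, Units.val_one] at this
    have : f (A ^ orderOf u) = 1 := by rw [map_pow, ← hA', hMat]
    have hentry : (((A ^ orderOf u - 1) i j : ℤ) : ZMod N) = 0 := by
      have h2 : f (A ^ orderOf u - 1) = 0 := by rw [map_sub, this, _root_.map_one, sub_self]
      have := congrFun (congrFun (congrArg (fun M => (M : Matrix (Fin 2) (Fin 2) (ZMod N))) h2) i) j
      simpa [hf, RingHom.mapMatrix_apply, Matrix.map_apply] using this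
    exact (ZMod.intCast_zmod_eq_zero_iff_dvd _ N).mp hentry
  exact (Nat.sInf_mem hne).1

/-- Basic fourth-moment bound: for an orthonormal basis of eigenvectors of a
unitary `U` satisfying the Egorov property for `A`,
`∑ |⟨T_N(n)ψ_i, ψ_i⟩|⁴ ≤ (N / ord(A,N)⁴) · ν(N,n)`. -/
theorem fourth_moment_basic_bound
    (A : Matrix (Fin 2) (Fin 2) ℤ) (hA : A.det = 1) (htr : 2 < |A.trace|)
    (N : ℕ) [NeZero N] (n : Fin 2 → ℤ)
    (U : (ZMod N → ℂ) ≃ₗ[ℂ] (ZMod N → ℂ))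
    (hUnitary : ∀ φ ψ : ZMod N → ℂ, innerH N (U φ) (U ψ) = innerH N φ ψ)
    (hEgorov : ∀ (m : Fin 2 → ℤ) (ψ : ZMod N → ℂ),
      TN N m (U ψ) = U (TN N (Matrix.vecMul m A) ψ))
    (ψ : Fin N → ZMod N → ℂ)
    (hON : ∀ i j, innerH N (ψ i) (ψ j) = if i = j then 1 else 0)
    (hEig : ∀ i, ∃ c : ℂ, U (ψ i) = c • ψ i) :
    ∑ i, ‖innerH N (TN N n (ψ i)) (ψ i)‖ ^ 4 ≤
      (N : ℝ) / (matOrd A N : ℝ) ^ 4 * (nu A N n : ℝ) := by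
  classical
  have hNpos : 0 < (N : ℝ) := by exact_mod_cast Nat.pos_of_ne_zero (NeZero.ne N)
  have hNne : (N : ℂ) ≠ 0 := Nat.cast_ne_zero.mpr (NeZero.ne N)
  have hrpos : 0 < matOrd A N := matOrd_pos A hA N
  set r : ℕ := matOrd A N with hr
  have hrR : 0 < (r : ℝ) := by exact_mod_cast hrpos
  set I : Finset ℕ := Finset.Icc 1 r with hI
  set m : ℕ → Fin 2 → ℤ := fun k => Matrix.vecMul n (A ^ k) with hm
  -- basic innerH lemmas
  set nsq : (ZMod N → ℂ) → ℝ := fun χ => ∑ Q : ZMod N, ‖χ Q‖ ^ 2 with hnsq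
  have hnsq_nonneg : ∀ χ, 0 ≤ nsq χ := fun χ => Finset.sum_nonneg fun Q _ => by positivity
  have habs : ∀ φ χ : ZMod N → ℂ, ‖innerH N φ χ‖ ≤
      (N:ℝ)⁻¹ * (Real.sqrt (nsq φ) * Real.sqrt (nsq χ)) := by
    intro φ χ
    unfold innerH
    rw [norm_mul, norm_inv, Complex.norm_natCast, hnsq]
    exact mul_le_mul_of_nonneg_left (cs_sum N φ χ) (by positivity)
  have hself : ∀ χ : ZMod N → ℂ, innerH N χ χ = (((N:ℝ)⁻¹ * nsq χ : ℝ) : ℂ) := by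
    intro χ
    unfold innerH
    rw [hnsq]
    rw [show ∑ Q : ZMod N, χ Q * (starRingEnd ℂ) (χ Q)
        = ((∑ Q : ZMod N, ‖χ Q‖ ^ 2 : ℝ) : ℂ) by
      push_cast
      refine Finset.sum_congr rfl fun Q _ => ?_
      rw [Complex.mul_conj]
      norm_cast
      rw [Complex.sq_norm]]
    push_cast
    ring
  have hsumL : ∀ {β : Type} (s : Finset β) (f : β → ZMod N → ℂ) (χ : ZMod N → ℂ),
      innerH N (fun Q => ∑ k ∈ s, f k Q) χ = ∑ k ∈ s, innerH N (f k) χ := by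
    intro β s f χ
    unfold innerH
    rw [← Finset.mul_sum]
    congr 1
    rw [Finset.sum_comm]
    exact Finset.sum_congr rfl fun Q _ => by simp [Finset.sum_mul]
  have hsumR : ∀ {β : Type} (s : Finset β) (f : β → ZMod N → ℂ) (χ : ZMod N → ℂ),
      innerH N χ (fun Q => ∑ k ∈ s, f k Q) = ∑ k ∈ s, innerH N χ (f k) := by
    intro β s f χ
    unfold innerH
    rw [← Finset.mul_sum]
    congr 1
    rw [Finset.sum_comm]
    exact Finset.sum_congr rfl fun Q _ => by simp [map_sum, Finset.mul_sum]
  have hips : ∀ (c : ℂ) (φ χ : ZMod N → ℂ), innerH N (c • φ) (c • χ)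
      = c * (starRingEnd ℂ) c * innerH N φ χ := by
    intro c φ χ
    unfold innerH
    rw [show ∑ Q : ZMod N, (c • φ) Q * (starRingEnd ℂ) ((c • χ) Q)
        = c * (starRingEnd ℂ) c * ∑ Q : ZMod N, φ Q * (starRingEnd ℂ) (χ Q) by
      rw [Finset.mul_sum]
      refine Finset.sum_congr rfl fun Q _ => ?_
      simp only [Pi.smul_apply, smul_eq_mul, _root_.map_mul]
      ring]
    ring
  -- eigenvector invariance
  have hstep : ∀ (mm : Fin 2 → ℤ) i, innerH N (TN N (Matrix.vecMul mm A) (ψ i)) (ψ i)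
      = innerH N (TN N mm (ψ i)) (ψ i) := by
    intro mm i
    obtain ⟨c, hc⟩ := hEig i
    have hcc : c * (starRingEnd ℂ) c = 1 := by
      have h1 := hUnitary (ψ i) (ψ i)
      rw [hc, hips c (ψ i) (ψ i), hON i i, if_pos rfl, mul_one] at h1
      exact h1
    have hTNsmul : TN N mm (c • ψ i) = c • TN N mm (ψ i) := by
      funext Q
      simp only [TN, Pi.smul_apply, smul_eq_mul]
      ring
    calc innerH N (TN N (Matrix.vecMul mm A) (ψ i)) (ψ i)
        = innerH N (U (TN N (Matrix.vecMul mm A) (ψ i))) (U (ψ i)) := (hUnitary _ _).symm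
      _ = innerH N (TN N mm (U (ψ i))) (U (ψ i)) := by rw [hEgorov]
      _ = innerH N (TN N mm (c • ψ i)) (c • ψ i) := by rw [hc]
      _ = innerH N (c • TN N mm (ψ i)) (c • ψ i) := by rw [hTNsmul]
      _ = c * (starRingEnd ℂ) c * innerH N (TN N mm (ψ i)) (ψ i) := hips c _ _
      _ = innerH N (TN N mm (ψ i)) (ψ i) := by rw [hcc, one_mul]
  have hiter : ∀ (k : ℕ) i, innerH N (TN N (m k) (ψ i)) (ψ i)
      = innerH N (TN N n (ψ i)) (ψ i) := by
    intro k i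
    induction k with
    | zero => simp [hm]
    | succ k ih =>
        have hmk : m (k+1) = Matrix.vecMul (m k) A := by
          rw [hm]
          simp only []
          rw [pow_succ, ← Matrix.vecMul_vecMul]
        rw [hmk, hstep (m k) i, ih]
  -- squared-norm of basis vectors
  have hnsq_psi : ∀ i, nsq (ψ i) = N := by
    intro i
    have h1 := hON i i
    rw [if_pos rfl, hself (ψ i)] at h1
    have h2 : (N:ℝ)⁻¹ * nsq (ψ i) = 1 := by exact_mod_cast h1
    field_simp at h2
    linarith
  -- the averaged operator
  have hΦa : ∀ i, innerH N (fun Q => ∑ k ∈ I, TN N (m k) (ψ i) Q) (ψ i)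
      = (r : ℂ) * innerH N (TN N n (ψ i)) (ψ i) := by
    intro i
    rw [hsumL I (fun k => TN N (m k) (ψ i)) (ψ i)]
    rw [Finset.sum_congr rfl (fun k _ => hiter k i)]
    rw [Finset.sum_const, hI, Nat.card_Icc]
    simp [nsmul_eq_mul]
  have hΦΞ : ∀ i, innerH N (fun Q => ∑ k ∈ I, TN N (m k) (ψ i) Q)
        (fun Q => ∑ k ∈ I, TN N (m k) (ψ i) Q)
      = innerH N (ψ i) (fun Q => ∑ p ∈ I ×ˢ I, TN N (-(m p.2)) (TN N (m p.1) (ψ i)) Q) := by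
    intro i
    calc innerH N (fun Q => ∑ k ∈ I, TN N (m k) (ψ i) Q) (fun Q => ∑ k ∈ I, TN N (m k) (ψ i) Q)
        = ∑ k ∈ I, innerH N (TN N (m k) (ψ i)) (fun Q => ∑ k ∈ I, TN N (m k) (ψ i) Q) :=
          hsumL I (fun k => TN N (m k) (ψ i)) _
      _ = ∑ k ∈ I, ∑ l ∈ I, innerH N (TN N (m k) (ψ i)) (TN N (m l) (ψ i)) :=
          Finset.sum_congr rfl fun k _ => hsumR I (fun l => TN N (m l) (ψ i)) (TN N (m k) (ψ i))
      _ = ∑ l ∈ I, ∑ k ∈ I, innerH N (TN N (m k) (ψ i)) (TN N (m l) (ψ i)) := Finset.sum_comm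
      _ = ∑ p ∈ I ×ˢ I, innerH N (TN N (m p.2) (ψ i)) (TN N (m p.1) (ψ i)) :=
          (Finset.sum_product I I fun p => innerH N (TN N (m p.2) (ψ i)) (TN N (m p.1) (ψ i))).symm
      _ = ∑ p ∈ I ×ˢ I, innerH N (ψ i) (TN N (-(m p.2)) (TN N (m p.1) (ψ i))) :=
          Finset.sum_congr rfl fun p _ => TN_adjoint N (m p.2) (ψ i) (TN N (m p.1) (ψ i))
      _ = innerH N (ψ i) (fun Q => ∑ p ∈ I ×ˢ I, TN N (-(m p.2)) (TN N (m p.1) (ψ i)) Q) :=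
          (hsumR (I ×ˢ I) (fun p => TN N (-(m p.2)) (TN N (m p.1) (ψ i))) (ψ i)).symm
  -- per-i inequality
  have hkey : ∀ i, ‖innerH N (TN N n (ψ i)) (ψ i)‖ ^ 4
      ≤ ((N:ℝ) * (r:ℝ)^4)⁻¹ *
        nsq (fun Q => ∑ p ∈ I ×ˢ I, TN N (-(m p.2)) (TN N (m p.1) (ψ i)) Q) := by
    intro i
    obtain ⟨Φi, hΦd⟩ : ∃ f : ZMod N → ℂ,
        f = (fun Q => ∑ k ∈ I, TN N (m k) (ψ i) Q) := ⟨_, rfl⟩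
    obtain ⟨Ξi, hΞd⟩ : ∃ f : ZMod N → ℂ,
        f = (fun Q => ∑ p ∈ I ×ˢ I, TN N (-(m p.2)) (TN N (m p.1) (ψ i)) Q) := ⟨_, rfl⟩
    rw [← hΞd]
    have hΦa' : innerH N Φi (ψ i) = (r : ℂ) * innerH N (TN N n (ψ i)) (ψ i) := by
      rw [hΦd]; exact hΦa i
    have hΦΞ' : innerH N Φi Φi = innerH N (ψ i) Ξi := by
      rw [hΦd, hΞd]; exact hΦΞ i
    have hα0 : 0 ≤ ‖innerH N (TN N n (ψ i)) (ψ i)‖ := norm_nonneg _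
    set α : ℝ := ‖innerH N (TN N n (ψ i)) (ψ i)‖ with hα
    have hP0 : 0 ≤ nsq Φi := hnsq_nonneg _
    have hR0 : 0 ≤ nsq Ξi := hnsq_nonneg _
    set P : ℝ := nsq Φi with hPd
    set R : ℝ := nsq Ξi with hRd
    -- r * α ≤ N⁻¹ √P √N
    have h1 : (r:ℝ) * α ≤ (N:ℝ)⁻¹ * (Real.sqrt P * Real.sqrt (N:ℝ)) := by
      have hh := habs Φi (ψ i)
      rw [hΦa', norm_mul, Complex.norm_natCast, hnsq_psi i] at hh
      exact hh
    -- P ≤ √N √R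
    have h2 : P ≤ Real.sqrt (N:ℝ) * Real.sqrt R := by
      have hPa : ‖innerH N Φi Φi‖ = (N:ℝ)⁻¹ * P := by
        rw [hself Φi, Complex.norm_real, Real.norm_eq_abs,
          abs_of_nonneg (mul_nonneg (by positivity) hP0)]
      have hh := habs (ψ i) Ξi
      rw [← hΦΞ', hPa, hnsq_psi i] at hh
      calc P = (N:ℝ) * ((N:ℝ)⁻¹ * P) := by field_simp
        _ ≤ (N:ℝ) * ((N:ℝ)⁻¹ * (Real.sqrt (N:ℝ) * Real.sqrt R)) :=
            mul_le_mul_of_nonneg_left hh hNpos.le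
        _ = Real.sqrt (N:ℝ) * Real.sqrt R := by field_simp
    -- combine
    have h1sq : ((r:ℝ)*α)^2 ≤ ((N:ℝ)⁻¹ * (Real.sqrt P * Real.sqrt (N:ℝ)))^2 :=
      pow_le_pow_left₀ (by positivity) h1 2
    have hexp : ((N:ℝ)⁻¹ * (Real.sqrt P * Real.sqrt (N:ℝ)))^2 = P / N := by
      rw [mul_pow, mul_pow, Real.sq_sqrt hP0, Real.sq_sqrt hNpos.le]
      field_simp
    have h3' : ((r:ℝ)*α)^2 * N ≤ P := (le_div_iff₀ hNpos).mp (h1sq.trans_eq hexp)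
    have h3 : (N:ℝ) * (r:ℝ)^2 * α^2 ≤ P := by nlinarith [h3']
    have h4 : P^2 ≤ (N:ℝ) * R := by
      calc P^2 ≤ (Real.sqrt (N:ℝ) * Real.sqrt R)^2 := pow_le_pow_left₀ hP0 h2 2
        _ = (Real.sqrt (N:ℝ))^2 * (Real.sqrt R)^2 := by ring
        _ = (N:ℝ) * R := by rw [Real.sq_sqrt hNpos.le, Real.sq_sqrt hR0]
    have h6 : (N:ℝ)^2 * (r:ℝ)^4 * α^4 ≤ (N:ℝ) * R := by
      have h5 : ((N:ℝ) * (r:ℝ)^2 * α^2)^2 ≤ P^2 := pow_le_pow_left₀ (by positivity) h3 2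
      calc (N:ℝ)^2 * (r:ℝ)^4 * α^4 = ((N:ℝ) * (r:ℝ)^2 * α^2)^2 := by ring
        _ ≤ P^2 := h5
        _ ≤ (N:ℝ) * R := h4
    have hgoal : α^4 * ((N:ℝ)^2 * (r:ℝ)^4) ≤ (N:ℝ) * R := by nlinarith [h6]
    calc α^4 ≤ ((N:ℝ) * R) / ((N:ℝ)^2 * (r:ℝ)^4) := (le_div_iff₀ (by positivity)).mpr hgoal
      _ = ((N:ℝ) * (r:ℝ)^4)⁻¹ * R := by
          field_simp
  -- expansion of innerH Ξ Ξ
  have hexpand : ∀ i, innerH N (fun Q => ∑ p ∈ I ×ˢ I, TN N (-(m p.2)) (TN N (m p.1) (ψ i)) Q)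
        (fun Q => ∑ p ∈ I ×ˢ I, TN N (-(m p.2)) (TN N (m p.1) (ψ i)) Q)
      = ∑ p1 ∈ I ×ˢ I, ∑ p2 ∈ I ×ˢ I,
          innerH N (TN N (-(m p2.1)) (TN N (m p2.2)
            (TN N (-(m p1.2)) (TN N (m p1.1) (ψ i))))) (ψ i) := by
    intro i
    calc innerH N (fun Q => ∑ p ∈ I ×ˢ I, TN N (-(m p.2)) (TN N (m p.1) (ψ i)) Q)
          (fun Q => ∑ p ∈ I ×ˢ I, TN N (-(m p.2)) (TN N (m p.1) (ψ i)) Q)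
        = ∑ p1 ∈ I ×ˢ I, innerH N (TN N (-(m p1.2)) (TN N (m p1.1) (ψ i)))
            (fun Q => ∑ p ∈ I ×ˢ I, TN N (-(m p.2)) (TN N (m p.1) (ψ i)) Q) :=
          hsumL (I ×ˢ I) _ _
      _ = ∑ p1 ∈ I ×ˢ I, ∑ p2 ∈ I ×ˢ I, innerH N (TN N (-(m p1.2)) (TN N (m p1.1) (ψ i)))
            (TN N (-(m p2.2)) (TN N (m p2.1) (ψ i))) :=
          Finset.sum_congr rfl fun p1 _ => hsumR (I ×ˢ I) _ _
      _ = _ := by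
          refine Finset.sum_congr rfl fun p1 _ => Finset.sum_congr rfl fun p2 _ => ?_
          calc innerH N (TN N (-(m p1.2)) (TN N (m p1.1) (ψ i)))
                (TN N (-(m p2.2)) (TN N (m p2.1) (ψ i)))
              = innerH N (TN N (m p2.2) (TN N (-(m p1.2)) (TN N (m p1.1) (ψ i))))
                  (TN N (m p2.1) (ψ i)) :=
                (TN_adjoint N (m p2.2) _ _).symm
            _ = innerH N (TN N (m p2.2) (TN N (-(m p1.2)) (TN N (m p1.1) (ψ i))))
                  (TN N (-(-(m p2.1))) (ψ i)) := by rw [neg_neg]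
            _ = innerH N (TN N (-(m p2.1)) (TN N (m p2.2)
                  (TN N (-(m p1.2)) (TN N (m p1.1) (ψ i))))) (ψ i) :=
                (TN_adjoint N (-(m p2.1)) _ _).symm
  -- linearity of vecMul
  have hlin : ∀ (i j k l : ℕ) (x : Fin 2),
      Matrix.vecMul n (A^i - A^j + A^k - A^l) x = m i x - m j x + m k x - m l x := by
    intro i j k l x
    rw [hm]
    simp only [Matrix.vecMul, dotProduct, Matrix.sub_apply, Matrix.add_apply,
      mul_sub, mul_add, Finset.sum_sub_distrib, Finset.sum_add_distrib]
  -- bound each trace term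
  have hW : ∀ p1 p2 : ℕ × ℕ,
      ‖∑ i, innerH N (TN N (-(m p2.1)) (TN N (m p2.2)
          (TN N (-(m p1.2)) (TN N (m p1.1) (ψ i))))) (ψ i)‖
      ≤ if (∀ x, (N:ℤ) ∣ Matrix.vecMul n
            (A^p1.1 - A^p1.2 + A^p2.2 - A^p2.1) x) then (N:ℝ) else 0 := by
    intro p1 p2
    refine le_trans (trace_bound N ψ hON (m p1.1) (-(m p1.2)) (m p2.2) (-(m p2.1))) ?_
    have hiff : ((N:ℤ) ∣ (m p1.1 0 + (-(m p1.2)) 0 + (m p2.2) 0 + (-(m p2.1)) 0) ∧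
        (N:ℤ) ∣ (m p1.1 1 + (-(m p1.2)) 1 + (m p2.2) 1 + (-(m p2.1)) 1))
        ↔ (∀ x, (N:ℤ) ∣ Matrix.vecMul n (A^p1.1 - A^p1.2 + A^p2.2 - A^p2.1) x) := by
      rw [Fin.forall_fin_two, hlin, hlin]
      constructor
      · rintro ⟨h0, h1⟩
        constructor
        · have : m p1.1 0 + (-(m p1.2)) 0 + (m p2.2) 0 + (-(m p2.1)) 0
              = m p1.1 0 - m p1.2 0 + m p2.2 0 - m p2.1 0 := by
            simp [Pi.neg_apply]; ring
          rwa [this] at h0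
        · have : m p1.1 1 + (-(m p1.2)) 1 + (m p2.2) 1 + (-(m p2.1)) 1
              = m p1.1 1 - m p1.2 1 + m p2.2 1 - m p2.1 1 := by
            simp [Pi.neg_apply]; ring
          rwa [this] at h1
      · rintro ⟨h0, h1⟩
        constructor
        · have : m p1.1 0 + (-(m p1.2)) 0 + (m p2.2) 0 + (-(m p2.1)) 0
              = m p1.1 0 - m p1.2 0 + m p2.2 0 - m p2.1 0 := by
            simp [Pi.neg_apply]; ring
          rwa [this]
        · have : m p1.1 1 + (-(m p1.2)) 1 + (m p2.2) 1 + (-(m p2.1)) 1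
              = m p1.1 1 - m p1.2 1 + m p2.2 1 - m p2.1 1 := by
            simp [Pi.neg_apply]; ring
          rwa [this]
    exact le_of_eq (if_congr hiff rfl rfl)
  -- counting: nu as a quadruple sum
  have hnuF : ((nu A N n : ℝ)) = ∑ i1 ∈ I, ∑ j ∈ I, ∑ k ∈ I, ∑ l ∈ I,
      (if (∀ x, (N:ℤ) ∣ Matrix.vecMul n (A^i1 - A^j + A^k - A^l) x)
        then (1:ℝ) else 0) := by
    unfold nu
    rw [← hr]
    have hset : {q : ℕ × ℕ × ℕ × ℕ |
        q.1 ∈ Finset.Icc 1 r ∧ q.2.1 ∈ Finset.Icc 1 r ∧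
        q.2.2.1 ∈ Finset.Icc 1 r ∧ q.2.2.2 ∈ Finset.Icc 1 r ∧
        ∀ x, (N : ℤ) ∣ Matrix.vecMul n (A ^ q.1 - A ^ q.2.1 + A ^ q.2.2.1 - A ^ q.2.2.2) x}
        = ((I ×ˢ I ×ˢ I ×ˢ I).filter (fun q : ℕ × ℕ × ℕ × ℕ =>
            ∀ x, (N : ℤ) ∣ Matrix.vecMul n
              (A ^ q.1 - A ^ q.2.1 + A ^ q.2.2.1 - A ^ q.2.2.2) x) : Set (ℕ × ℕ × ℕ × ℕ)) := by
      ext q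
      simp only [Set.mem_setOf_eq, Finset.coe_filter, Finset.mem_product, hI]
      tauto
    rw [hset, Set.ncard_coe_finset, Finset.card_filter]
    push_cast
    simp only [Finset.sum_product]
  -- the double pair-sum equals N * nu
  have hcount : ∑ p1 ∈ I ×ˢ I, ∑ p2 ∈ I ×ˢ I,
      (if (∀ x, (N:ℤ) ∣ Matrix.vecMul n
          (A^p1.1 - A^p1.2 + A^p2.2 - A^p2.1) x) then (N:ℝ) else 0)
      = (N:ℝ) * (nu A N n : ℝ) := by
    rw [hnuF]
    rw [Finset.sum_product]
    rw [show (N:ℝ) * ∑ i1 ∈ I, ∑ j ∈ I, ∑ k ∈ I, ∑ l ∈ I,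
        (if (∀ x, (N:ℤ) ∣ Matrix.vecMul n (A^i1 - A^j + A^k - A^l) x) then (1:ℝ) else 0)
        = ∑ i1 ∈ I, ∑ j ∈ I, ∑ k ∈ I, ∑ l ∈ I,
        (if (∀ x, (N:ℤ) ∣ Matrix.vecMul n (A^i1 - A^j + A^k - A^l) x) then (N:ℝ) else 0) by
      rw [Finset.mul_sum]
      refine Finset.sum_congr rfl fun i1 _ => ?_
      rw [Finset.mul_sum]
      refine Finset.sum_congr rfl fun j _ => ?_
      rw [Finset.mul_sum]
      refine Finset.sum_congr rfl fun k _ => ?_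
      rw [Finset.mul_sum]
      refine Finset.sum_congr rfl fun l _ => ?_
      split <;> simp]
    simp only [Finset.sum_product]
    refine Finset.sum_congr rfl fun i1 _ => Finset.sum_congr rfl fun j _ => ?_
    exact Finset.sum_comm
  -- sum of the per-i bounds
  have hsum_nsq : ∑ i, nsq (fun Q => ∑ p ∈ I ×ˢ I, TN N (-(m p.2)) (TN N (m p.1) (ψ i)) Q)
      ≤ (N:ℝ) * ((N:ℝ) * (nu A N n : ℝ)) := by
    have hRe : ∀ i, nsq (fun Q => ∑ p ∈ I ×ˢ I, TN N (-(m p.2)) (TN N (m p.1) (ψ i)) Q)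
        = (N:ℝ) * (innerH N (fun Q => ∑ p ∈ I ×ˢ I, TN N (-(m p.2)) (TN N (m p.1) (ψ i)) Q)
            (fun Q => ∑ p ∈ I ×ˢ I, TN N (-(m p.2)) (TN N (m p.1) (ψ i)) Q)).re := by
      intro i
      rw [hself, Complex.ofReal_re]
      field_simp
    rw [Finset.sum_congr rfl fun i _ => hRe i]
    rw [← Finset.mul_sum]
    have hre2 : ∑ i, (innerH N (fun Q => ∑ p ∈ I ×ˢ I, TN N (-(m p.2)) (TN N (m p.1) (ψ i)) Q)
        (fun Q => ∑ p ∈ I ×ˢ I, TN N (-(m p.2)) (TN N (m p.1) (ψ i)) Q)).re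
        ≤ (N:ℝ) * (nu A N n : ℝ) := by
      rw [← Complex.re_sum]
      rw [Finset.sum_congr rfl fun i _ => hexpand i]
      rw [Finset.sum_comm]
      rw [Finset.sum_congr rfl fun p1 _ => Finset.sum_comm]
      calc (∑ p1 ∈ I ×ˢ I, ∑ p2 ∈ I ×ˢ I, ∑ i, innerH N (TN N (-(m p2.1)) (TN N (m p2.2)
              (TN N (-(m p1.2)) (TN N (m p1.1) (ψ i))))) (ψ i)).re
          ≤ ‖∑ p1 ∈ I ×ˢ I, ∑ p2 ∈ I ×ˢ I, ∑ i,
              innerH N (TN N (-(m p2.1)) (TN N (m p2.2)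
              (TN N (-(m p1.2)) (TN N (m p1.1) (ψ i))))) (ψ i)‖ := Complex.re_le_norm _
        _ ≤ ∑ p1 ∈ I ×ˢ I, ‖∑ p2 ∈ I ×ˢ I, ∑ i,
              innerH N (TN N (-(m p2.1)) (TN N (m p2.2)
              (TN N (-(m p1.2)) (TN N (m p1.1) (ψ i))))) (ψ i)‖ := norm_sum_le _ _
        _ ≤ ∑ p1 ∈ I ×ˢ I, ∑ p2 ∈ I ×ˢ I, ‖∑ i,
              innerH N (TN N (-(m p2.1)) (TN N (m p2.2)
              (TN N (-(m p1.2)) (TN N (m p1.1) (ψ i))))) (ψ i)‖ :=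
            Finset.sum_le_sum fun p1 _ => norm_sum_le _ _
        _ ≤ ∑ p1 ∈ I ×ˢ I, ∑ p2 ∈ I ×ˢ I,
              (if (∀ x, (N:ℤ) ∣ Matrix.vecMul n
                (A^p1.1 - A^p1.2 + A^p2.2 - A^p2.1) x) then (N:ℝ) else 0) :=
            Finset.sum_le_sum fun p1 _ => Finset.sum_le_sum fun p2 _ => hW p1 p2
        _ = (N:ℝ) * (nu A N n : ℝ) := hcount
    exact mul_le_mul_of_nonneg_left hre2 hNpos.le
  -- final assembly
  calc ∑ i, ‖innerH N (TN N n (ψ i)) (ψ i)‖ ^ 4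
      ≤ ∑ i, ((N:ℝ) * (r:ℝ)^4)⁻¹ *
          nsq (fun Q => ∑ p ∈ I ×ˢ I, TN N (-(m p.2)) (TN N (m p.1) (ψ i)) Q) :=
        Finset.sum_le_sum fun i _ => hkey i
    _ = ((N:ℝ) * (r:ℝ)^4)⁻¹ * ∑ i,
          nsq (fun Q => ∑ p ∈ I ×ˢ I, TN N (-(m p.2)) (TN N (m p.1) (ψ i)) Q) := by
        rw [Finset.mul_sum]
    _ ≤ ((N:ℝ) * (r:ℝ)^4)⁻¹ * ((N:ℝ) * ((N:ℝ) * (nu A N n : ℝ))) :=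
        mul_le_mul_of_nonneg_left hsum_nsq (by positivity)
    _ = (N : ℝ) / (r : ℝ) ^ 4 * (nu A N n : ℝ) := by
        field_simp
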